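/- Fix E ∈ K^{m×σ}, M ∈ K^{σ×σ}, and a shift s ∈ ℕ^m. Among all interpolation bases for (E,M), there is exactly one that is in s-Popov form. -/

import Mathlib

open Polynomial Matrix

/-- The `s`-row degree of a row vector `p`. -/
noncomputable def rowDegVec {K : Type*} [Field K] {m : ℕ} (s : Fin m → ℕ)
    (p : Fin m → Polynomial K) : WithBot ℕ :=
  Finset.univ.sup fun j => (p j).degree + (s j : WithBot ℕ)

/-- `c` is the `s`-pivot index of `p`. -/
noncomputable def IsPivotIdx {K : Type*} [Field K] {m : ℕ} (s : Fin m → ℕ)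
    (p : Fin m → Polynomial K) (c : Fin m) : Prop :=
  ((p c).degree + (s c : WithBot ℕ) = rowDegVec s p) ∧
    ∀ c', ((p c').degree + (s c' : WithBot ℕ) = rowDegVec s p) → c' ≤ c

/-- `P` is in `s`-Popov form: the `s`-pivots are monic, on the diagonal, and in each
column the nonpivot entries have degree strictly smaller than the pivot entry. -/
noncomputable def IsPopov {K : Type*} [Field K] {m : ℕ} (s : Fin m → ℕ)
    (P : Matrix (Fin m) (Fin m) (Polynomial K)) : Prop :=
  ∀ c, (P c c).Monic ∧ IsPivotIdx s (P c) c ∧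
    ∀ i, i ≠ c → (P i c).degree < (P c c).degree

/-- `p` is an interpolant for `(E,M)`. -/
def IsInterpolant {K : Type*} [Field K] {m σ : ℕ} (E : Matrix (Fin m) (Fin σ) K)
    (M : Matrix (Fin σ) (Fin σ) K) (p : Fin m → Polynomial K) : Prop :=
  ∑ c, Matrix.vecMul (E c) (Polynomial.aeval M (p c)) = 0

/-- The rows of `P` form a basis of the `K[X]`-module of interpolants for `(E,M)`. -/
def IsInterpBasis {K : Type*} [Field K] {m σ : ℕ} (E : Matrix (Fin m) (Fin σ) K)
    (M : Matrix (Fin σ) (Fin σ) K) (P : Matrix (Fin m) (Fin m) (Polynomial K)) : Prop :=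
  LinearIndependent (Polynomial K) (fun i => P i) ∧
    ∀ q : Fin m → Polynomial K,
      IsInterpolant E M q ↔ q ∈ Submodule.span (Polynomial K) (Set.range fun i => P i)

namespace PopovAux

variable {K : Type*} [Field K] {m : ℕ}

/-- weighted degree of entry `j`. -/
noncomputable def WDeg (s : Fin m → ℕ) (p : Fin m → Polynomial K) (j : Fin m) : WithBot ℕ :=
  (p j).degree + (s j : WithBot ℕ)

/-- convenient characterization of the pivot index -/
def Piv (s : Fin m → ℕ) (p : Fin m → Polynomial K) (c : Fin m) : Prop :=
  (∀ j, WDeg s p j ≤ WDeg s p c) ∧ ∀ j, c < j → WDeg s p j < WDeg s p c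

lemma wdeg_eq_bot_iff {s : Fin m → ℕ} {p : Fin m → Polynomial K} {j : Fin m} :
    WDeg s p j = ⊥ ↔ p j = 0 := by
  unfold WDeg
  rw [WithBot.add_eq_bot]
  simp [Polynomial.degree_eq_bot]

lemma piv_iff {s : Fin m → ℕ} {p : Fin m → Polynomial K} {c : Fin m} :
    IsPivotIdx s p c ↔ Piv s p c := by
  have hr : rowDegVec s p = Finset.univ.sup (WDeg s p) := rfl
  constructor
  · rintro ⟨h1, h2⟩
    replace h1 : WDeg s p c = Finset.univ.sup (WDeg s p) := h1
    replace h2 : ∀ c', WDeg s p c' = Finset.univ.sup (WDeg s p) → c' ≤ c := h2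
    constructor
    · intro j
      rw [h1]
      exact Finset.le_sup (Finset.mem_univ j)
    · intro j hj
      refine lt_of_le_of_ne ?_ ?_
      · rw [h1]; exact Finset.le_sup (Finset.mem_univ j)
      · intro he
        have := h2 j (by rw [he, h1])
        exact absurd this (not_le.2 hj)
  · rintro ⟨h1, h2⟩
    have hsup : Finset.univ.sup (WDeg s p) = WDeg s p c := by
      refine le_antisymm (Finset.sup_le fun j _ => h1 j) (Finset.le_sup (Finset.mem_univ c))
    constructor
    · show WDeg s p c = rowDegVec s p
      rw [hr, hsup]
    · intro c' hc'
      replace hc' : WDeg s p c' = rowDegVec s p := hc'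
      by_contra hlt
      push_neg at hlt
      have h3 := h2 c' hlt
      rw [hc', hr, hsup] at h3
      exact lt_irrefl _ h3

lemma piv_unique {s : Fin m → ℕ} {p : Fin m → Polynomial K} {c c' : Fin m}
    (h : Piv s p c) (h' : Piv s p c') : c = c' := by
  by_contra hne
  rcases lt_or_gt_of_ne hne with hlt | hlt
  · exact absurd (h'.1 c) (not_le.2 (h.2 c' hlt))
  · exact absurd (h.1 c') (not_le.2 (h'.2 c hlt))

lemma exists_piv {s : Fin m → ℕ} {p : Fin m → Polynomial K} (hp : p ≠ 0) :
    ∃ c, Piv s p c := by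
  have hne : (Finset.univ : Finset (Fin m)).Nonempty := by
    rcases Function.ne_iff.1 hp with ⟨j, -⟩
    exact ⟨j, Finset.mem_univ j⟩
  obtain ⟨i, -, hi⟩ := Finset.exists_mem_eq_sup Finset.univ hne (WDeg s p)
  have hTne : (Finset.univ.filter (fun j => WDeg s p j = WDeg s p i)).Nonempty := ⟨i, by simp⟩
  obtain ⟨c, hcT, hmax⟩ : ∃ c ∈ Finset.univ.filter (fun j => WDeg s p j = WDeg s p i),
      ∀ j ∈ Finset.univ.filter (fun j => WDeg s p j = WDeg s p i), j ≤ c :=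
    ⟨_, Finset.max'_mem _ hTne, fun j hj => Finset.le_max' _ j hj⟩
  rw [Finset.mem_filter] at hcT
  refine ⟨c, ?_, ?_⟩
  · intro j
    rw [hcT.2, ← hi]
    exact Finset.le_sup (Finset.mem_univ j)
  · intro j hj
    rw [hcT.2]
    refine lt_of_le_of_ne (by rw [← hi]; exact Finset.le_sup (Finset.mem_univ j)) ?_
    intro he
    have : j ∈ Finset.univ.filter (fun j => WDeg s p j = WDeg s p i) := by
      simp [he]
    exact absurd (hmax j this) (not_le.2 hj)

lemma piv_entry_ne_zero {s : Fin m → ℕ} {p : Fin m → Polynomial K} {c : Fin m}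
    (h : Piv s p c) (hp : p ≠ 0) : p c ≠ 0 := by
  intro h0
  apply hp
  funext j
  have := h.1 j
  rw [(wdeg_eq_bot_iff).2 h0, le_bot_iff, wdeg_eq_bot_iff] at this
  exact this

lemma wdeg_ne_bot {s : Fin m → ℕ} {p : Fin m → Polynomial K} {j : Fin m}
    (h : p j ≠ 0) : WDeg s p j ≠ ⊥ := by
  rw [Ne, wdeg_eq_bot_iff]; exact h


/-- Predictable degree property. -/
lemma pdp {s : Fin m → ℕ} {P : Fin m → Fin m → Polynomial K}
    (hP : ∀ i, Piv s (P i) i) (hP0 : ∀ i, P i i ≠ 0)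
    {a : Fin m → Polynomial K} (ha : a ≠ 0) :
    ∃ c, a c ≠ 0 ∧ Piv s (∑ i, a i • P i) c ∧
      ((∑ i, a i • P i) c).degree = (a c).degree + (P c c).degree := by
  classical
  set q := ∑ i, a i • P i with hq
  have hqj : ∀ j, q j = ∑ i, a i * P i j := by
    intro j
    rw [hq, Finset.sum_apply]
    rfl
  set W : Fin m → WithBot ℕ := fun i => (a i).degree + WDeg s (P i) i with hWdef
  obtain ⟨i₀, hi₀⟩ := Function.ne_iff.1 ha
  have hne : (Finset.univ : Finset (Fin m)).Nonempty := ⟨i₀, Finset.mem_univ _⟩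
  set D := Finset.univ.sup W with hD
  have hWne : ∀ i, a i ≠ 0 → W i ≠ ⊥ := by
    intro i hai h
    rw [hWdef] at h
    simp only [WithBot.add_eq_bot, degree_eq_bot] at h
    rcases h with h | h
    · exact hai h
    · exact wdeg_ne_bot (hP0 i) h
  have hDne : D ≠ ⊥ := by
    intro h
    have h1 : W i₀ ≤ D := Finset.le_sup (Finset.mem_univ i₀)
    rw [h, le_bot_iff] at h1
    exact hWne i₀ (by simpa using hi₀) h1
  have hterm_le : ∀ i j, (a i * P i j).degree + (s j : WithBot ℕ) ≤ W i := by
    intro i j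
    rw [degree_mul, add_assoc]
    exact add_le_add_right ((hP i).1 j) _
  have hterm_lt : ∀ i j, i < j → a i ≠ 0 →
      (a i * P i j).degree + (s j : WithBot ℕ) < W i := by
    intro i j hij hai
    rw [degree_mul, add_assoc]
    exact WithBot.add_lt_add_left (by rwa [Ne, degree_eq_bot]) ((hP i).2 j hij)
  have hWD : ∀ i, W i ≤ D := fun i => Finset.le_sup (Finset.mem_univ i)
  -- choose the largest index attaining the sup
  have hTne : (Finset.univ.filter (fun j => W j = D)).Nonempty := by
    obtain ⟨i, -, hi⟩ := Finset.exists_mem_eq_sup Finset.univ hne W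
    exact ⟨i, by simp [hi.symm, hD]⟩
  obtain ⟨c, hcT, hmax⟩ : ∃ c ∈ Finset.univ.filter (fun j => W j = D),
      ∀ j ∈ Finset.univ.filter (fun j => W j = D), j ≤ c :=
    ⟨_, Finset.max'_mem _ hTne, fun j hj => Finset.le_max' _ j hj⟩
  rw [Finset.mem_filter] at hcT
  have hWc : W c = D := hcT.2
  have hWlt : ∀ i, c < i → W i < D := by
    intro i hi
    refine lt_of_le_of_ne (hWD i) ?_
    intro h
    exact absurd (hmax i (by simp [h])) (not_le.2 hi)
  have hac : a c ≠ 0 := by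
    intro h
    apply hDne
    rw [← hWc, hWdef]
    simp [h]
  have hPcc := hP0 c
  have hsc : ((s c : ℕ) : WithBot ℕ) ≠ ⊥ := WithBot.natCast_ne_bot _
  set n := (a c).natDegree + (P c c).natDegree with hn
  have hnD : (n : WithBot ℕ) + (s c : WithBot ℕ) = D := by
    rw [← hWc, hWdef]
    show ((n : ℕ) : WithBot ℕ) + _ = (a c).degree + WDeg s (P c) c
    rw [degree_eq_natDegree hac]
    show _ = _ + ((P c c).degree + (s c : WithBot ℕ))
    rw [degree_eq_natDegree hPcc, hn]
    push_cast
    ring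
  -- the coefficient of q c in degree n
  have hcoeff : (q c).coeff n = (a c).leadingCoeff * (P c c).leadingCoeff := by
    rw [hqj c, Polynomial.finset_sum_coeff]
    rw [Finset.sum_eq_single c]
    · exact coeff_mul_degree_add_degree _ _
    · intro i _ hic
      by_cases hai : a i = 0
      · simp [hai]
      refine coeff_eq_zero_of_degree_lt ?_
      rw [← WithBot.add_lt_add_iff_right hsc, hnD]
      rcases lt_or_gt_of_ne hic with h | h
      · exact lt_of_lt_of_le (hterm_lt i c h hai) (hWD i)
      · exact lt_of_le_of_lt (hterm_le i c) (hWlt i h)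
    · intro h
      exact absurd (Finset.mem_univ c) h
  have hcne : (q c).coeff n ≠ 0 := by
    rw [hcoeff]
    exact mul_ne_zero (leadingCoeff_ne_zero.2 hac) (leadingCoeff_ne_zero.2 hPcc)
  -- upper bounds on all weighted degrees
  have hdegub : ∀ j, WDeg s q j ≤ D := by
    intro j
    have h1 : (q j).degree ≤ Finset.univ.sup (fun i => (a i * P i j).degree) := by
      rw [hqj j]; exact degree_sum_le _ _
    obtain ⟨i, -, hi⟩ := Finset.exists_mem_eq_sup Finset.univ hne
      (fun i => (a i * P i j).degree)
    calc WDeg s q j ≤ (a i * P i j).degree + (s j : WithBot ℕ) := by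
          refine add_le_add_left ?_ _
          rw [← hi]; exact h1
      _ ≤ W i := hterm_le i j
      _ ≤ D := hWD i
  have hdeglt : ∀ j, c < j → WDeg s q j < D := by
    intro j hj
    have h1 : (q j).degree ≤ Finset.univ.sup (fun i => (a i * P i j).degree) := by
      rw [hqj j]; exact degree_sum_le _ _
    obtain ⟨i, -, hi⟩ := Finset.exists_mem_eq_sup Finset.univ hne
      (fun i => (a i * P i j).degree)
    have h2 : WDeg s q j ≤ (a i * P i j).degree + (s j : WithBot ℕ) := by
      refine add_le_add_left ?_ _
      rw [← hi]; exact h1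
    by_cases hai : a i = 0
    · refine lt_of_le_of_lt h2 ?_
      rw [hai, zero_mul, degree_zero]
      have : (⊥ : WithBot ℕ) + (s j : WithBot ℕ) = ⊥ := by
        rw [WithBot.add_eq_bot]; left; rfl
      rw [this]
      exact Ne.bot_lt hDne
    rcases lt_or_ge i j with h | h
    · exact lt_of_le_of_lt h2 (lt_of_lt_of_le (hterm_lt i j h hai) (hWD i))
    · have : c < i := lt_of_lt_of_le hj h
      exact lt_of_le_of_lt h2 (lt_of_le_of_lt (hterm_le i j) (hWlt i this))
  have hdegq : (q c).degree = (n : WithBot ℕ) := by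
    refine le_antisymm ?_ (le_degree_of_ne_zero hcne)
    have := hdegub c
    rw [← hnD] at this
    exact (WithBot.add_le_add_iff_right hsc).1 this
  have hWqc : WDeg s q c = D := by
    rw [← hnD]
    show (q c).degree + _ = _
    rw [hdegq]
  refine ⟨c, hac, ⟨?_, ?_⟩, ?_⟩
  · intro j
    rw [hWqc]
    exact hdegub j
  · intro j hjc
    rw [hWqc]
    exact hdeglt j hjc
  · rw [hdegq, degree_eq_natDegree hac, degree_eq_natDegree hPcc, hn]
    push_cast
    ring


lemma linearIndependent_of_piv {s : Fin m → ℕ} {P : Fin m → Fin m → Polynomial K}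
    (hP : ∀ i, Piv s (P i) i) (hP0 : ∀ i, P i i ≠ 0) :
    LinearIndependent (Polynomial K) P := by
  rw [Fintype.linearIndependent_iff]
  intro g hg
  by_contra h
  push_neg at h
  obtain ⟨i, hi⟩ := h
  have hg0 : g ≠ 0 := fun h0 => hi (congrFun h0 i)
  obtain ⟨c, hac, -, hdeg⟩ := pdp hP hP0 hg0
  rw [hg] at hdeg
  simp only [Pi.zero_apply, degree_zero] at hdeg
  rcases (WithBot.add_eq_bot).1 hdeg.symm with h | h
  · exact hac (degree_eq_bot.1 h)
  · exact hP0 c (degree_eq_bot.1 h)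

lemma span_deg_ge {s : Fin m → ℕ} {P : Fin m → Fin m → Polynomial K}
    (hP : ∀ i, Piv s (P i) i) (hP0 : ∀ i, P i i ≠ 0)
    {q : Fin m → Polynomial K}
    (hq : q ∈ Submodule.span (Polynomial K) (Set.range P)) (hq0 : q ≠ 0)
    {c : Fin m} (hc : Piv s q c) : (P c c).degree ≤ (q c).degree := by
  obtain ⟨a, ha⟩ := (Submodule.mem_span_range_iff_exists_fun _).1 hq
  have ha0 : a ≠ 0 := by
    rintro rfl
    apply hq0
    rw [← ha]
    simp
  obtain ⟨c', hac', hpiv', hdeg'⟩ := pdp hP hP0 ha0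
  rw [ha] at hpiv' hdeg'
  obtain rfl : c = c' := piv_unique hc hpiv'
  rw [hdeg']
  calc (P c c).degree = 0 + (P c c).degree := (zero_add _).symm
    _ ≤ (a c).degree + (P c c).degree :=
        add_le_add_left (zero_le_degree_iff.2 hac') _

lemma reduce_step {s : Fin m → ℕ} {q p : Fin m → Polynomial K} {c : Fin m}
    (hq : Piv s q c) (hqc : q c ≠ 0) (hp : Piv s p c) (hpc : p c ≠ 0)
    (hd : (p c).natDegree ≤ (q c).natDegree) :
    ∃ t : Polynomial K, (∀ j, WDeg s (q - t • p) j ≤ WDeg s q c) ∧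
      (∀ j, c ≤ j → WDeg s (q - t • p) j < WDeg s q c) := by
  set e := (q c).natDegree - (p c).natDegree with he
  set u := (q c).leadingCoeff / (p c).leadingCoeff with hu
  have hu0 : u ≠ 0 := div_ne_zero (leadingCoeff_ne_zero.2 hqc) (leadingCoeff_ne_zero.2 hpc)
  set t := C u * X ^ e with ht
  have hdegt : t.degree = (e : WithBot ℕ) := by rw [ht]; exact degree_C_mul_X_pow e hu0
  have hsc : ((s c : ℕ) : WithBot ℕ) ≠ ⊥ := WithBot.natCast_ne_bot _
  have hepc : ((e : ℕ) : WithBot ℕ) + ((p c).natDegree : WithBot ℕ) = ((q c).natDegree : WithBot ℕ) := by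
    rw [← Nat.cast_add]
    norm_cast
    omega
  have key_le : ∀ j, (t * p j).degree + (s j : WithBot ℕ) ≤ WDeg s q c := by
    intro j
    rw [degree_mul, hdegt, add_assoc]
    calc ((e : ℕ) : WithBot ℕ) + ((p j).degree + (s j : WithBot ℕ))
        ≤ (e : WithBot ℕ) + WDeg s p c := add_le_add_right (hp.1 j) _
      _ = WDeg s q c := by
          show _ + ((p c).degree + _) = (q c).degree + _
          rw [degree_eq_natDegree hpc, degree_eq_natDegree hqc, ← add_assoc, hepc]
  have key_lt : ∀ j, c < j → (t * p j).degree + (s j : WithBot ℕ) < WDeg s q c := by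
    intro j hj
    rw [degree_mul, hdegt, add_assoc]
    calc ((e : ℕ) : WithBot ℕ) + ((p j).degree + (s j : WithBot ℕ))
        < (e : WithBot ℕ) + WDeg s p c :=
          WithBot.add_lt_add_left (WithBot.natCast_ne_bot _) (hp.2 j hj)
      _ = WDeg s q c := by
          show _ + ((p c).degree + _) = (q c).degree + _
          rw [degree_eq_natDegree hpc, degree_eq_natDegree hqc, ← add_assoc, hepc]
  have hdc : (q c - t * p c).degree < (q c).degree := by
    refine degree_sub_lt ?_ hqc ?_
    · rw [degree_mul, hdegt, degree_eq_natDegree hpc, degree_eq_natDegree hqc, hepc]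
    · rw [leadingCoeff_mul, ht, leadingCoeff_C_mul_X_pow, hu,
        div_mul_cancel₀ _ (leadingCoeff_ne_zero.2 hpc)]
  refine ⟨t, ?_, ?_⟩
  · intro j
    have h2 : (q j - t * p j).degree ≤ max (q j).degree (t * p j).degree :=
      degree_sub_le _ _
    show (q j - t * p j).degree + (s j : WithBot ℕ) ≤ WDeg s q c
    calc (q j - t * p j).degree + (s j : WithBot ℕ)
        ≤ max (q j).degree (t * p j).degree + (s j : WithBot ℕ) := add_le_add_left h2 _
      _ ≤ WDeg s q c := by
          rcases max_choice (q j).degree (t * p j).degree with h | h <;> rw [h]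
          · exact hq.1 j
          · exact key_le j
  · intro j hj
    show (q j - t * p j).degree + (s j : WithBot ℕ) < WDeg s q c
    rcases eq_or_lt_of_le hj with heq | hj'
    · subst heq
      show (q c - t * p c).degree + (s c : WithBot ℕ) < (q c).degree + (s c : WithBot ℕ)
      exact WithBot.add_lt_add_right (WithBot.natCast_ne_bot _) hdc
    · have h2 : (q j - t * p j).degree ≤ max (q j).degree (t * p j).degree :=
        degree_sub_le _ _
      calc (q j - t * p j).degree + (s j : WithBot ℕ)
          ≤ max (q j).degree (t * p j).degree + (s j : WithBot ℕ) := add_le_add_left h2 _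
        _ < WDeg s q c := by
            rcases max_choice (q j).degree (t * p j).degree with h | h <;> rw [h]
            · exact hq.2 j hj'
            · exact key_lt j hj'

lemma mem_span_of_min {s : Fin m → ℕ} (N : Submodule (Polynomial K) (Fin m → Polynomial K))
    {P : Fin m → Fin m → Polynomial K}
    (hmem : ∀ i, P i ∈ N) (hP : ∀ i, Piv s (P i) i) (hP0 : ∀ i, P i i ≠ 0)
    (hmin : ∀ q ∈ N, q ≠ 0 → ∀ c, Piv s q c → (P c c).natDegree ≤ (q c).natDegree) :
    ∀ q ∈ N, q ∈ Submodule.span (Polynomial K) (Set.range P) := by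
  suffices h : ∀ n : ℕ, ∀ q ∈ N, (q ≠ 0 → ∀ c : Fin m, Piv s q c →
      ((q c).natDegree + s c) * m + (c : ℕ) < n) →
      q ∈ Submodule.span (Polynomial K) (Set.range P) by
    intro q hq
    by_cases hq0 : q = 0
    · rw [hq0]; exact Submodule.zero_mem _
    obtain ⟨c₀, hc₀⟩ := exists_piv hq0
    refine h (((q c₀).natDegree + s c₀) * m + (c₀ : ℕ) + 1) q hq ?_
    intro _ c hc
    obtain rfl : c₀ = c := piv_unique hc₀ hc
    omega
  intro n
  induction n with
  | zero =>
    intro q hq hcode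
    by_cases hq0 : q = 0
    · rw [hq0]; exact Submodule.zero_mem _
    obtain ⟨c, hc⟩ := exists_piv hq0
    exact absurd (hcode hq0 c hc) (Nat.not_lt_zero _)
  | succ n ih =>
    intro q hq hcode
    by_cases hq0 : q = 0
    · rw [hq0]; exact Submodule.zero_mem _
    obtain ⟨c, hc⟩ := exists_piv hq0
    have hqc := piv_entry_ne_zero hc hq0
    have hdle : (P c c).natDegree ≤ (q c).natDegree := hmin q hq hq0 c hc
    obtain ⟨t, hle, hlt⟩ := reduce_step hc hqc (hP c) (hP0 c) hdle
    have hq'N : q - t • P c ∈ N := N.sub_mem hq (N.smul_mem t (hmem c))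
    have hq'span : q - t • P c ∈ Submodule.span (Polynomial K) (Set.range P) := by
      refine ih _ hq'N ?_
      intro hq'0 c' hc'
      have hq'c' := piv_entry_ne_zero hc' hq'0
      have h1 : WDeg s (q - t • P c) c' ≤ WDeg s q c := hle c'
      have h2 : c ≤ c' → WDeg s (q - t • P c) c' < WDeg s q c := hlt c'
      have e1 : WDeg s (q - t • P c) c' =
          ((((q - t • P c) c').natDegree + s c' : ℕ) : WithBot ℕ) := by
        show ((q - t • P c) c').degree + _ = _
        rw [degree_eq_natDegree hq'c']
        push_cast; ring
      have e2 : WDeg s q c = (((q c).natDegree + s c : ℕ) : WithBot ℕ) := by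
        show (q c).degree + _ = _
        rw [degree_eq_natDegree hqc]
        push_cast; ring
      rw [e1, e2] at h1 h2
      have h1' : ((q - t • P c) c').natDegree + s c' ≤ (q c).natDegree + s c := by
        exact_mod_cast h1
      have hcn := hcode hq0 c hc
      have hc'm : (c' : ℕ) < m := c'.isLt
      rcases lt_or_ge (c' : ℕ) (c : ℕ) with hcc | hcc
      · have hmul := Nat.mul_le_mul_right m h1'
        omega
      · have h2' : ((q - t • P c) c').natDegree + s c' < (q c).natDegree + s c := by
          have : c ≤ c' := by
            rcases le_or_gt c c' with h | h
            · exact h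
            · exact absurd (Fin.lt_iff_val_lt_val.1 h) (not_lt.2 hcc)
          exact_mod_cast h2 this
        have hmul : (((q - t • P c) c').natDegree + s c' + 1) * m ≤ ((q c).natDegree + s c) * m :=
          Nat.mul_le_mul_right m (by omega)
        have hexp : (((q - t • P c) c').natDegree + s c' + 1) * m =
            (((q - t • P c) c').natDegree + s c') * m + m := by ring
        omega
    have : q = (q - t • P c) + t • P c := by rw [sub_add_cancel]
    rw [this]
    exact Submodule.add_mem _ hq'span
      (Submodule.smul_mem _ t (Submodule.subset_span ⟨c, rfl⟩))


lemma code_eq {m A B a b : ℕ} (ha : a < m) (hb : b < m) (h : A * m + a = B * m + b) :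
    A = B ∧ a = b := by
  have h1 : A = B := by
    rcases Nat.lt_trichotomy A B with h2 | h2 | h2
    · exfalso
      have hm : (A + 1) * m ≤ B * m := Nat.mul_le_mul_right m (by omega)
      have e1 : (A + 1) * m = A * m + m := by ring
      omega
    · exact h2
    · exfalso
      have hm : (B + 1) * m ≤ A * m := Nat.mul_le_mul_right m (by omega)
      have e1 : (B + 1) * m = B * m + m := by ring
      omega
  constructor
  · exact h1
  · have : A * m = B * m := by rw [h1]
    omega

lemma exists_reduced_row {s : Fin m → ℕ} (N : Submodule (Polynomial K) (Fin m → Polynomial K))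
    {Q : Fin m → Fin m → Polynomial K}
    (hmem : ∀ i, Q i ∈ N) (hQ : ∀ i, Piv s (Q i) i) (hQm : ∀ i, (Q i i).Monic)
    (c : Fin m) :
    ∃ p ∈ N, Piv s p c ∧ (p c).Monic ∧ (p c).degree = (Q c c).degree ∧
      ∀ j, j ≠ c → (p j).degree < (Q j j).degree := by
  classical
  have hQ0 : ∀ i, Q i i ≠ 0 := fun i => (hQm i).ne_zero
  suffices h : ∀ n : ℕ, ∀ q ∈ N, Piv s q c → (q c).Monic → (q c).degree = (Q c c).degree →
      (∀ j e, j ≠ c → (Q j j).natDegree ≤ e → (q j).coeff e ≠ 0 → (e + s j) * m + (j : ℕ) < n) →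
      ∃ p ∈ N, Piv s p c ∧ (p c).Monic ∧ (p c).degree = (Q c c).degree ∧
        ∀ j, j ≠ c → (p j).degree < (Q j j).degree by
    set B := Finset.univ.sup (fun j => (Q c j).natDegree + s j) with hB
    refine h ((B + 1) * m) (Q c) (hmem c) (hQ c) (hQm c) rfl ?_
    intro j e hjc hde hcoe
    have h1 : e ≤ (Q c j).natDegree := le_natDegree_of_ne_zero hcoe
    have h2 : (Q c j).natDegree + s j ≤ B := by
      rw [hB]; exact Finset.le_sup (f := fun j => (Q c j).natDegree + s j) (Finset.mem_univ j)
    have h3 : (j : ℕ) < m := j.isLt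
    have h4 : (e + s j) * m ≤ B * m := Nat.mul_le_mul_right m (by omega)
    have h5 : (B + 1) * m = B * m + m := by ring
    omega
  intro n
  induction n with
  | zero =>
    intro q hqN hqpiv hqmon hqdeg hOff
    -- no offenders at all: q is already reduced
    refine ⟨q, hqN, hqpiv, hqmon, hqdeg, ?_⟩
    intro j hjc
    rw [degree_eq_natDegree (hQ0 j), degree_lt_iff_coeff_zero]
    intro e he
    by_contra hne
    exact absurd (hOff j e hjc he hne) (Nat.not_lt_zero _)
  | succ n ih =>
    intro q hqN hqpiv hqmon hqdeg hOff
    set BF := Finset.univ.sup (fun k => (q k).natDegree) with hBF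
    set F : Finset (Fin m × ℕ) :=
      (Finset.univ ×ˢ Finset.range (BF + 1)).filter
        (fun x => x.1 ≠ c ∧ (Q x.1 x.1).natDegree ≤ x.2 ∧ (q x.1).coeff x.2 ≠ 0) with hF
    have hFmem : ∀ k f, k ≠ c → (Q k k).natDegree ≤ f → (q k).coeff f ≠ 0 → (k, f) ∈ F := by
      intro k f h1 h2 h3
      rw [hF, Finset.mem_filter]
      refine ⟨Finset.mem_product.2 ⟨Finset.mem_univ _, Finset.mem_range.2 ?_⟩, h1, h2, h3⟩
      have h4 := le_natDegree_of_ne_zero h3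
      have h5 : (q k).natDegree ≤ BF := by
        rw [hBF]; exact Finset.le_sup (f := fun k => (q k).natDegree) (Finset.mem_univ k)
      omega
    by_cases hFe : F = ∅
    · -- reduced already
      refine ⟨q, hqN, hqpiv, hqmon, hqdeg, ?_⟩
      intro j hjc
      rw [degree_eq_natDegree (hQ0 j), degree_lt_iff_coeff_zero]
      intro e he
      by_contra hne
      have := hFmem j e hjc he hne
      rw [hFe] at this
      exact absurd this (Finset.notMem_empty _)
    · obtain ⟨⟨j, e⟩, hjeF, hmax⟩ :=
        Finset.exists_max_image F (fun x => (x.2 + s x.1) * m + (x.1 : ℕ))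
          (Finset.nonempty_of_ne_empty hFe)
      replace hmax : ∀ x' ∈ F, (x'.2 + s x'.1) * m + (x'.1 : ℕ) ≤ (e + s j) * m + (j : ℕ) := hmax
      rw [hF, Finset.mem_filter] at hjeF
      obtain ⟨-, hjc', hde', hcoe'⟩ := hjeF
      have hjc : j ≠ c := hjc'
      have hde : (Q j j).natDegree ≤ e := hde'
      have hcoe : (q j).coeff e ≠ 0 := hcoe'
      clear hjc' hde' hcoe' 
      have hcodej : (e + s j) * m + (j : ℕ) < n + 1 := hOff j e hjc hde hcoe
      -- the subtraction
      set f0 := e - (Q j j).natDegree with hf0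
      set t := C ((q j).coeff e) * X ^ f0 with ht
      have hdegt : t.degree = (f0 : WithBot ℕ) := degree_C_mul_X_pow f0 hcoe
      have hf0e : f0 + (Q j j).natDegree = e := by omega
      set q' := q - t • Q j with hq'
      have hq'N : q' ∈ N := N.sub_mem hqN (N.smul_mem t (hmem j))
      have hq'app : ∀ k, q' k = q k - t * Q j k := fun k => rfl
      -- weighted degree bound on the subtracted row
      have hbound : ∀ k, (t * Q j k).degree + (s k : WithBot ℕ) ≤ ((e + s j : ℕ) : WithBot ℕ) := by
        intro k
        rw [degree_mul, hdegt, add_assoc]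
        calc ((f0 : ℕ) : WithBot ℕ) + ((Q j k).degree + (s k : WithBot ℕ))
            ≤ (f0 : WithBot ℕ) + WDeg s (Q j) j := add_le_add_right ((hQ j).1 k) _
          _ = ((e + s j : ℕ) : WithBot ℕ) := by
              show _ + ((Q j j).degree + _) = _
              rw [degree_eq_natDegree (hQ0 j), ← add_assoc, ← Nat.cast_add, hf0e]
              push_cast; ring
      have hboundlt : ∀ k, j < k →
          (t * Q j k).degree + (s k : WithBot ℕ) < ((e + s j : ℕ) : WithBot ℕ) := by
        intro k hk
        rw [degree_mul, hdegt, add_assoc]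
        calc ((f0 : ℕ) : WithBot ℕ) + ((Q j k).degree + (s k : WithBot ℕ))
            < (f0 : WithBot ℕ) + WDeg s (Q j) j :=
              WithBot.add_lt_add_left (WithBot.natCast_ne_bot _) ((hQ j).2 k hk)
          _ = ((e + s j : ℕ) : WithBot ℕ) := by
              show _ + ((Q j j).degree + _) = _
              rw [degree_eq_natDegree (hQ0 j), ← add_assoc, ← Nat.cast_add, hf0e]
              push_cast; ring
      have hqc0 : q c ≠ 0 := hqmon.ne_zero
      -- e + s j is at most the pivot weighted degree, strict when c < j
      have hesj_le : ((e + s j : ℕ) : WithBot ℕ) ≤ WDeg s q j := by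
        show _ ≤ (q j).degree + _
        push_cast
        exact add_le_add_left (le_degree_of_ne_zero hcoe) _
      have hesj_lt : (t * Q j c).degree + (s c : WithBot ℕ) < WDeg s q c := by
        rcases lt_or_gt_of_ne hjc with h | h
        · -- j < c : strict in hboundlt
          exact lt_of_lt_of_le (hboundlt c h) (le_trans hesj_le (hqpiv.1 j))
        · -- c < j : strict from pivot
          exact lt_of_le_of_lt (hbound c)
            (lt_of_le_of_lt hesj_le (hqpiv.2 j h))
      have htQc_lt : (t * Q j c).degree < (q c).degree := by
        have := hesj_lt
        show (t * Q j c).degree < (q c).degree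
        exact (WithBot.add_lt_add_iff_right (WithBot.natCast_ne_bot (s c))).1 this
      -- q' c has the same degree and is monic
      have hq'c_deg : (q' c).degree = (q c).degree := by
        rw [hq'app]
        exact degree_sub_eq_left_of_degree_lt htQc_lt
      have hq'c_mon : (q' c).Monic := by
        have hnd : (q' c).natDegree = (q c).natDegree := natDegree_eq_of_degree_eq hq'c_deg
        unfold Polynomial.Monic Polynomial.leadingCoeff
        rw [hnd, hq'app, Polynomial.coeff_sub,
          coeff_natDegree_eq_zero_of_degree_lt htQc_lt, sub_zero]
        exact hqmon
      -- q' still has pivot c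
      have hq'piv : Piv s q' c := by
        have hWc : WDeg s q' c = WDeg s q c := by
          show (q' c).degree + _ = (q c).degree + _
          rw [hq'c_deg]
        constructor
        · intro k
          rw [hWc]
          show (q k - t * Q j k).degree + (s k : WithBot ℕ) ≤ WDeg s q c
          calc (q k - t * Q j k).degree + (s k : WithBot ℕ)
              ≤ max (q k).degree (t * Q j k).degree + (s k : WithBot ℕ) :=
                add_le_add_left (degree_sub_le _ _) _
            _ ≤ WDeg s q c := by
                rcases max_choice (q k).degree (t * Q j k).degree with h | h <;> rw [h]
                · exact hqpiv.1 k
                · exact le_trans (hbound k) (le_trans hesj_le (hqpiv.1 j))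
        · intro k hk
          rw [hWc]
          show (q k - t * Q j k).degree + (s k : WithBot ℕ) < WDeg s q c
          calc (q k - t * Q j k).degree + (s k : WithBot ℕ)
              ≤ max (q k).degree (t * Q j k).degree + (s k : WithBot ℕ) :=
                add_le_add_left (degree_sub_le _ _) _
            _ < WDeg s q c := by
                rcases max_choice (q k).degree (t * Q j k).degree with h | h <;> rw [h]
                · exact hqpiv.2 k hk
                · rcases lt_or_gt_of_ne hjc with hj' | hj'
                  · exact lt_of_lt_of_le (hboundlt k (lt_trans hj' hk))
                      (le_trans hesj_le (hqpiv.1 j))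
                  · exact lt_of_le_of_lt (hbound k)
                      (lt_of_le_of_lt hesj_le (hqpiv.2 j hj'))
      -- offender codes strictly decrease
      have hq'Off : ∀ k f, k ≠ c → (Q k k).natDegree ≤ f → (q' k).coeff f ≠ 0 →
          (f + s k) * m + (k : ℕ) < (e + s j) * m + (j : ℕ) := by
        intro k f hkc hdk hne
        by_contra hge
        push_neg at hge
        -- first : (k,f) cannot be (j,e)
        have hne_pair : ¬ (k = j ∧ f = e) := by
          rintro ⟨rfl, rfl⟩
          apply hne
          rw [hq'app, Polynomial.coeff_sub, ht, mul_assoc, Polynomial.coeff_C_mul]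
          have : (X ^ f0 * Q k k).coeff f = (Q k k).coeff (Q k k).natDegree := by
            have hf : f = (Q k k).natDegree + f0 := by omega
            rw [hf]
            exact coeff_X_pow_mul _ _ _
          rw [this, (hQm k).coeff_natDegree, mul_one, sub_self]
        -- coefficient of q at (k,f) is zero by maximality
        have hqk0 : (q k).coeff f = 0 := by
          by_contra h0
          have hle2 : (f + s k) * m + (k : ℕ) ≤ (e + s j) * m + (j : ℕ) :=
            hmax (k, f) (hFmem k f hkc hdk h0)
          have heq : (f + s k) * m + (k : ℕ) = (e + s j) * m + (j : ℕ) :=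
            le_antisymm hle2 hge
          have hkm : (k : ℕ) < m := k.isLt
          have hjm : (j : ℕ) < m := j.isLt
          obtain ⟨h1, h2⟩ := code_eq hkm hjm heq
          have hkj : k = j := Fin.ext h2
          subst hkj
          have : f = e := by omega
          exact hne_pair ⟨rfl, this⟩
        -- coefficient of t * Q j k at f is zero (degree too small)
        have htq0 : (t * Q j k).coeff f = 0 := by
          by_contra h0
          have hfle : ((f : ℕ) : WithBot ℕ) ≤ (t * Q j k).degree := le_degree_of_ne_zero h0
          have h2 : ((f + s k : ℕ) : WithBot ℕ) ≤ ((e + s j : ℕ) : WithBot ℕ) := by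
            calc ((f + s k : ℕ) : WithBot ℕ) = ((f : ℕ) : WithBot ℕ) + (s k : WithBot ℕ) := by
                  push_cast; ring
              _ ≤ (t * Q j k).degree + (s k : WithBot ℕ) := add_le_add_left hfle _
              _ ≤ _ := hbound k
          have h2' : f + s k ≤ e + s j := by exact_mod_cast h2
          have hkm : (k : ℕ) < m := k.isLt
          have hjm : (j : ℕ) < m := j.isLt
          -- from hge : (e+s j)*m + j ≤ (f+s k)*m + k
          have h3 : f + s k = e + s j := by
            rcases Nat.lt_or_ge (f + s k) (e + s j) with hlt2 | hge2
            · exfalso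
              have hm2 : (f + s k + 1) * m ≤ (e + s j) * m :=
                Nat.mul_le_mul_right m (by omega)
              have e1 : (f + s k + 1) * m = (f + s k) * m + m := by ring
              omega
            · omega
          have hjk : (j : ℕ) ≤ (k : ℕ) := by
            have h4 : (f + s k) * m = (e + s j) * m := by rw [h3]
            omega
          rcases lt_or_eq_of_le hjk with hlt | heq'
          · have := hboundlt k (Fin.lt_iff_val_lt_val.2 hlt)
            have h5 : ((f + s k : ℕ) : WithBot ℕ) < ((e + s j : ℕ) : WithBot ℕ) := by
              calc ((f + s k : ℕ) : WithBot ℕ) = ((f : ℕ) : WithBot ℕ) + (s k : WithBot ℕ) := by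
                    push_cast; ring
                _ ≤ (t * Q j k).degree + (s k : WithBot ℕ) := add_le_add_left hfle _
                _ < _ := this
            have : f + s k < e + s j := by exact_mod_cast h5
            omega
          · have hkj : k = j := Fin.ext heq'.symm
            subst hkj
            have : f = e := by omega
            exact hne_pair ⟨rfl, this⟩
        apply hne
        rw [hq'app, Polynomial.coeff_sub, hqk0, htq0, sub_zero]
      -- apply induction hypothesis
      refine ih q' hq'N hq'piv hq'c_mon (by rw [hq'c_deg, hqdeg]) ?_
      intro k f hkc hdk hne
      have := hq'Off k f hkc hdk hne
      omega

end PopovAux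

namespace PopovAux

noncomputable def interpMod {K : Type*} [Field K] {m σ : ℕ} (E : Matrix (Fin m) (Fin σ) K)
    (M : Matrix (Fin σ) (Fin σ) K) : Submodule (Polynomial K) (Fin m → Polynomial K) where
  carrier := {q | IsInterpolant E M q}
  zero_mem' := by
    show ∑ c, Matrix.vecMul (E c) (Polynomial.aeval M ((0 : Fin m → Polynomial K) c)) = 0
    refine Finset.sum_eq_zero fun c _ => ?_
    simp
  add_mem' := by
    intro p q hp hq
    replace hp : ∑ c, Matrix.vecMul (E c) (Polynomial.aeval M (p c)) = 0 := hp
    replace hq : ∑ c, Matrix.vecMul (E c) (Polynomial.aeval M (q c)) = 0 := hq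
    show ∑ c, Matrix.vecMul (E c) (Polynomial.aeval M ((p + q) c)) = 0
    have h1 : ∀ c ∈ Finset.univ, Matrix.vecMul (E c) (Polynomial.aeval M ((p + q) c)) =
        Matrix.vecMul (E c) (Polynomial.aeval M (p c)) +
          Matrix.vecMul (E c) (Polynomial.aeval M (q c)) := by
      intro c _
      rw [Pi.add_apply, map_add, Matrix.vecMul_add]
    rw [Finset.sum_congr rfl h1, Finset.sum_add_distrib, hp, hq, add_zero]
  smul_mem' := by
    intro a q hq
    replace hq : ∑ c, Matrix.vecMul (E c) (Polynomial.aeval M (q c)) = 0 := hq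
    show ∑ c, Matrix.vecMul (E c) (Polynomial.aeval M ((a • q) c)) = 0
    have h1 : ∀ c ∈ Finset.univ, Matrix.vecMul (E c) (Polynomial.aeval M ((a • q) c)) =
        Matrix.vecMul (Matrix.vecMul (E c) (Polynomial.aeval M (q c)))
          (Polynomial.aeval M a) := by
      intro c _
      have h2 : (a • q) c = q c * a := by rw [Pi.smul_apply, smul_eq_mul, mul_comm]
      rw [h2, _root_.map_mul, ← Matrix.vecMul_vecMul]
    rw [Finset.sum_congr rfl h1]
    have h2 := map_sum (Matrix.vecMulLinear (Polynomial.aeval M a))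
      (fun c => Matrix.vecMul (E c) (Polynomial.aeval M (q c))) Finset.univ
    simp only [Matrix.vecMulLinear_apply] at h2
    rw [← h2, hq, Matrix.zero_vecMul]

lemma mem_interpMod_iff {K : Type*} [Field K] {m σ : ℕ} {E : Matrix (Fin m) (Fin σ) K}
    {M : Matrix (Fin σ) (Fin σ) K} {q : Fin m → Polynomial K} :
    q ∈ interpMod E M ↔ IsInterpolant E M q := Iff.rfl

lemma single_charpoly_mem {K : Type*} [Field K] {m σ : ℕ} (E : Matrix (Fin m) (Fin σ) K)
    (M : Matrix (Fin σ) (Fin σ) K) (c : Fin m) :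
    Pi.single c M.charpoly ∈ interpMod E M := by
  rw [mem_interpMod_iff]
  unfold IsInterpolant
  refine Finset.sum_eq_zero fun i _ => ?_
  by_cases h : i = c
  · subst h
    rw [Pi.single_eq_same, Matrix.aeval_self_charpoly, Matrix.vecMul_zero]
  · rw [Pi.single_eq_of_ne h, map_zero, Matrix.vecMul_zero]

lemma single_charpoly_piv {K : Type*} [Field K] {m σ : ℕ} (M : Matrix (Fin σ) (Fin σ) K)
    (s : Fin m → ℕ) (c : Fin m) :
    Piv s (Pi.single c M.charpoly : Fin m → Polynomial K) c := by
  have hc : WDeg s (Pi.single c M.charpoly : Fin m → Polynomial K) c ≠ ⊥ := by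
    apply wdeg_ne_bot
    rw [Pi.single_eq_same]
    exact M.charpoly_monic.ne_zero
  constructor
  · intro j
    by_cases h : j = c
    · subst h; exact le_refl _
    · have : WDeg s (Pi.single c M.charpoly : Fin m → Polynomial K) j = ⊥ := by
        rw [wdeg_eq_bot_iff, Pi.single_eq_of_ne h]
      rw [this]; exact bot_le
  · intro j hj
    have h : j ≠ c := ne_of_gt hj
    have hbot : WDeg s (Pi.single c M.charpoly : Fin m → Polynomial K) j = ⊥ := by
      rw [wdeg_eq_bot_iff, Pi.single_eq_of_ne h]
    rw [hbot]
    exact Ne.bot_lt hc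

lemma single_charpoly_ne_zero {K : Type*} [Field K] {m σ : ℕ} (M : Matrix (Fin σ) (Fin σ) K)
    (c : Fin m) : (Pi.single c M.charpoly : Fin m → Polynomial K) ≠ 0 := by
  intro h
  have := congrFun h c
  rw [Pi.single_eq_same] at this
  exact M.charpoly_monic.ne_zero this

end PopovAux

open PopovAux in
/-- among all interpolation bases for `(E,M)`, exactly one is in
`s`-Popov form. -/
theorem existsUnique_popov_interpolation_basis
    {K : Type*} [Field K] {m σ : ℕ}
    (E : Matrix (Fin m) (Fin σ) K) (M : Matrix (Fin σ) (Fin σ) K) (s : Fin m → ℕ) :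
    ∃! P : Matrix (Fin m) (Fin m) (Polynomial K),
      IsInterpBasis E M P ∧ IsPopov s P := by
  classical
  set N := interpMod E M with hN
  -- minimal monic pivot rows
  have hrow : ∀ c : Fin m, ∃ q, q ∈ N ∧ Piv s q c ∧ (q c).Monic ∧
      ∀ r ∈ N, r ≠ 0 → Piv s r c → (q c).natDegree ≤ (r c).natDegree := by
    intro c
    set S : Set ℕ := {n | ∃ q, q ∈ N ∧ q ≠ 0 ∧ Piv s q c ∧ (q c).natDegree = n} with hS
    have hSne : S.Nonempty :=
      ⟨_, Pi.single c M.charpoly, single_charpoly_mem E M c, single_charpoly_ne_zero M c,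
        single_charpoly_piv M s c, rfl⟩
    obtain ⟨q, hqN, hq0, hqpiv, hqdeg⟩ := Nat.sInf_mem hSne
    have hqc : q c ≠ 0 := piv_entry_ne_zero hqpiv hq0
    set u := (q c).leadingCoeff⁻¹ with hu
    have hu0 : u ≠ 0 := inv_ne_zero (leadingCoeff_ne_zero.2 hqc)
    refine ⟨C u • q, N.smul_mem _ hqN, ?_, ?_, ?_⟩
    · -- Piv preserved under scaling
      have hdeg : ∀ j, ((C u • q) j).degree = (q j).degree := by
        intro j
        show (C u * q j).degree = (q j).degree
        rw [degree_mul, degree_C hu0, zero_add]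
      constructor
      · intro j
        show ((C u • q) j).degree + _ ≤ ((C u • q) c).degree + _
        rw [hdeg j, hdeg c]
        exact hqpiv.1 j
      · intro j hj
        show ((C u • q) j).degree + _ < ((C u • q) c).degree + _
        rw [hdeg j, hdeg c]
        exact hqpiv.2 j hj
    · show (C u * q c).Monic
      unfold Polynomial.Monic
      rw [leadingCoeff_mul, leadingCoeff_C, hu, inv_mul_cancel₀ (leadingCoeff_ne_zero.2 hqc)]
    · intro r hrN hr0 hrpiv
      have h1 : ((C u • q) c).natDegree = (q c).natDegree := by
        show (C u * q c).natDegree = _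
        rw [natDegree_C_mul hu0]
      rw [h1, hqdeg]
      exact Nat.sInf_le ⟨r, hrN, hr0, hrpiv, rfl⟩
  choose Q hQN hQpiv hQmon hQmin using hrow
  have hQ0 : ∀ c, Q c c ≠ 0 := fun c => (hQmon c).ne_zero
  -- reduce the rows
  have hred : ∀ c : Fin m, ∃ p ∈ N, Piv s p c ∧ (p c).Monic ∧ (p c).degree = (Q c c).degree ∧
      ∀ j, j ≠ c → (p j).degree < (Q j j).degree :=
    fun c => exists_reduced_row N hQN hQpiv hQmon c
  choose P hPN hPpiv hPmon hPdeg hPred using hred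
  have hP0 : ∀ c, P c c ≠ 0 := fun c => (hPmon c).ne_zero
  have hPnatdeg : ∀ c, (P c c).natDegree = (Q c c).natDegree :=
    fun c => natDegree_eq_of_degree_eq (hPdeg c)
  have hPmin : ∀ q ∈ N, q ≠ 0 → ∀ c, Piv s q c → (P c c).natDegree ≤ (q c).natDegree := by
    intro q hq hq0 c hc
    rw [hPnatdeg c]
    exact hQmin c q hq hq0 hc
  -- spanning
  have hPspan : ∀ q, q ∈ N ↔ q ∈ Submodule.span (Polynomial K) (Set.range P) := by
    intro q
    constructor
    · exact fun hq => mem_span_of_min N hPN hPpiv hP0 hPmin q hq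
    · intro hq
      have : Submodule.span (Polynomial K) (Set.range P) ≤ N := by
        rw [Submodule.span_le]
        rintro x ⟨i, rfl⟩
        exact hPN i
      exact this hq
  -- the degree minimality in `degree` form for span members
  have hPdegmin : ∀ q ∈ N, q ≠ 0 → ∀ c, Piv s q c → (P c c).degree ≤ (q c).degree := by
    intro q hq hq0 c hc
    have h1 := hPmin q hq hq0 c hc
    have hqc : q c ≠ 0 := piv_entry_ne_zero hc hq0
    rw [degree_eq_natDegree (hP0 c), degree_eq_natDegree hqc]
    exact_mod_cast h1
  refine ⟨Matrix.of P, ⟨⟨?_, ?_⟩, ?_⟩, ?_⟩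
  · -- linear independence
    exact linearIndependent_of_piv hPpiv hP0
  · -- interpolation basis property
    intro q
    exact (hPspan q)
  · -- Popov form
    intro c
    refine ⟨hPmon c, piv_iff.2 (hPpiv c), ?_⟩
    intro i hic
    show (P i c).degree < (P c c).degree
    rw [hPdeg c]
    exact hPred i c (Ne.symm hic)
  · -- uniqueness
    intro P' ⟨⟨hli', hspan'⟩, hpop'⟩
    have hmon' : ∀ c, (P' c c).Monic := fun c => (hpop' c).1
    have hpiv' : ∀ c, Piv s (P' c) c := fun c => piv_iff.1 (hpop' c).2.1
    have h0' : ∀ c, P' c c ≠ 0 := fun c => (hmon' c).ne_zero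
    have hrow0' : ∀ c, P' c ≠ 0 := by
      intro c h
      exact h0' c (congrFun h c)
    have hrowN' : ∀ c, P' c ∈ N := by
      intro c
      rw [hN, mem_interpMod_iff, hspan' (P' c)]
      exact Submodule.subset_span ⟨c, rfl⟩
    -- degrees of diagonal entries agree
    have hdiag : ∀ c, (P' c c).degree = (P c c).degree := by
      intro c
      refine le_antisymm ?_ ?_
      · -- P c ∈ span of rows of P', apply span_deg_ge
        have hPcN : P c ∈ N := hPN c
        have hPc_span : P c ∈ Submodule.span (Polynomial K) (Set.range fun i => P' i) := by
          rw [← hspan' (P c)]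
          exact hPcN
        have hPc0 : P c ≠ 0 := fun h => hP0 c (congrFun h c)
        exact span_deg_ge hpiv' h0' hPc_span hPc0 (hPpiv c)
      · exact hPdegmin (P' c) (hrowN' c) (hrow0' c) c (hpiv' c)
    -- rows agree
    have hrows : ∀ c, P' c = P c := by
      intro c
      by_contra hne
      set r := P' c - P c with hr
      have hr0 : r ≠ 0 := sub_ne_zero.2 hne
      have hrN : r ∈ N := N.sub_mem (hrowN' c) (hPN c)
      obtain ⟨j, hj⟩ := exists_piv hr0
      have hrj : r j ≠ 0 := piv_entry_ne_zero hj hr0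
      have hlow : (r j).degree < (P j j).degree := by
        by_cases hjc : j = c
        · subst hjc
          show (P' j j - P j j).degree < (P j j).degree
          have h1 : (P' j j).degree = (P j j).degree := hdiag j
          calc (P' j j - P j j).degree < (P' j j).degree :=
                degree_sub_lt h1 (h0' j) (by rw [(hmon' j).leadingCoeff, (hPmon j).leadingCoeff])
            _ = (P j j).degree := h1
        · show (P' c j - P c j).degree < (P j j).degree
          have h1 : (P' c j).degree < (P j j).degree := by
            have := (hpop' j).2.2 c (by intro h; exact hjc h.symm)
            calc (P' c j).degree < (P' j j).degree := this
              _ = (P j j).degree := hdiag j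
          have h2 : (P c j).degree < (P j j).degree := by
            rw [hPdeg j]
            exact hPred c j hjc
          calc (P' c j - P c j).degree ≤ max (P' c j).degree (P c j).degree :=
                degree_sub_le _ _
            _ < (P j j).degree := max_lt h1 h2
      exact absurd (hPdegmin r hrN hr0 j hj) (not_le.2 hlow)
    funext i j
    exact congrFun (hrows i) j
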